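/- Let A be a finite set with at least 2 elements and let R be a finite set of local rules on A all of radius r ≥ 1. The set F_R = { ψ ∈ R^* : the partial transition function h_ψ is not surjective } is a regular language over the alphabet R (it is recognized by a finite automaton). -/

import Mathlib

namespace Stmt6Aux

variable {A : Type*} {R : Type*} (r : ℕ) (rule : R → (Fin (2 * r + 1) → A) → A)

/-- The window of `w` of length `2r` starting at position `m`. -/
def win (w : ℕ → A) (m : ℕ) : Fin (2 * r) → A := fun k => w (m + (k : ℕ))

/-- The extended window of `w` of length `2r+1` starting at position `m`. -/
def winE (w : ℕ → A) (m : ℕ) : Fin (2 * r + 1) → A := fun k => w (m + (k : ℕ))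

/-- Shift a window by one, appending a new letter on the right. -/
def shiftWin (v : Fin (2 * r) → A) (a : A) : Fin (2 * r) → A :=
  fun k => (Fin.snoc v a : Fin (2 * r + 1) → A) k.succ

lemma snoc_win (w : ℕ → A) (m : ℕ) :
    (Fin.snoc (win r w m) (w (m + 2 * r)) : Fin (2 * r + 1) → A) = winE r w m := by
  funext k
  induction k using Fin.lastCases with
  | last => simp [winE, Fin.snoc_last]
  | cast j => simp [winE, win, Fin.snoc_castSucc]

lemma shift_win (w : ℕ → A) (m : ℕ) :
    shiftWin r (win r w m) (w (m + 2 * r)) = win r w (m + 1) := by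
  funext k
  show (Fin.snoc (win r w m) (w (m + 2 * r)) : Fin (2 * r + 1) → A) k.succ = _
  rw [snoc_win]
  show w (m + ((k : ℕ) + 1)) = w (m + 1 + (k : ℕ))
  congr 1; omega

section cons

variable (hr : 1 ≤ r) (v : Fin (2 * r) → A) (a : A) (w : ℕ → A)

/-- Prepend `v 0` to `w`. -/
noncomputable def consW : ℕ → A := fun n => Nat.casesOn n (v ⟨0, by omega⟩) w

lemma consW_succ (m : ℕ) : consW r hr v w (m + 1) = w m := rfl

lemma winE_consW (m : ℕ) : winE r (consW r hr v w) (m + 1) = winE r w m := by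
  funext k
  show consW r hr v w (m + 1 + (k : ℕ)) = w (m + (k : ℕ))
  rw [show m + 1 + (k : ℕ) = (m + (k : ℕ)) + 1 by omega, consW_succ]

lemma win_consW (m : ℕ) : win r (consW r hr v w) (m + 1) = win r w m := by
  funext k
  show consW r hr v w (m + 1 + (k : ℕ)) = w (m + (k : ℕ))
  rw [show m + 1 + (k : ℕ) = (m + (k : ℕ)) + 1 by omega, consW_succ]

lemma winE_consW_zero (hsh : win r w 0 = shiftWin r v a) :
    winE r (consW r hr v w) 0 = Fin.snoc v a := by
  funext k
  induction k using Fin.lastCases with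
  | last =>
    show consW r hr v w (0 + 2 * r) = (Fin.snoc v a : Fin (2 * r + 1) → A) (Fin.last (2 * r))
    rw [Fin.snoc_last]
    obtain ⟨j, hj⟩ : ∃ j, 2 * r = j + 1 := ⟨2 * r - 1, by omega⟩
    rw [show 0 + 2 * r = j + 1 by omega, consW_succ]
    have h1 : w j = win r w 0 ⟨j, by omega⟩ := by
      show w j = w (0 + j); congr 1; omega
    rw [h1, hsh]
    show (Fin.snoc v a : Fin (2 * r + 1) → A) (Fin.succ ⟨j, by omega⟩) = a
    have h2 : (Fin.succ (⟨j, by omega⟩ : Fin (2 * r))) = Fin.last (2 * r) := by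
      ext; simp; omega
    rw [h2, Fin.snoc_last]
  | cast j =>
    show consW r hr v w (0 + (j : ℕ)) = (Fin.snoc v a : Fin (2 * r + 1) → A) j.castSucc
    rw [Fin.snoc_castSucc, show 0 + (j : ℕ) = (j : ℕ) from by omega]
    rcases j with ⟨jv, hjv⟩
    match jv, hjv with
    | 0, hjv => rfl
    | (i + 1), hjv =>
      show consW r hr v w (i + 1) = v ⟨i + 1, hjv⟩
      rw [consW_succ]
      have h1 : w i = win r w 0 ⟨i, by omega⟩ := by
        show w i = w (0 + i); congr 1; omega
      rw [h1, hsh]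
      show (Fin.snoc v a : Fin (2 * r + 1) → A) (Fin.succ ⟨i, by omega⟩) = v ⟨i + 1, hjv⟩
      have h2 : (Fin.succ (⟨i, by omega⟩ : Fin (2 * r)))
          = Fin.castSucc ⟨i + 1, hjv⟩ := by ext; simp
      rw [h2, Fin.snoc_castSucc]

lemma win_consW_zero (hsh : win r w 0 = shiftWin r v a) :
    win r (consW r hr v w) 0 = v := by
  funext k
  have h := congrFun (winE_consW_zero r hr v a w hsh) k.castSucc
  rw [Fin.snoc_castSucc] at h
  have h2 : win r (consW r hr v w) 0 k = winE r (consW r hr v w) 0 k.castSucc := by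
    show consW r hr v w (0 + (k : ℕ)) = consW r hr v w (0 + ((k.castSucc : Fin (2*r+1)) : ℕ))
    congr 1
  rw [h2, h]

end cons

/-- One step of the window-set semantics. -/
def step1 (ρ : R) (S : Set (Fin (2 * r) → A)) (b : A) : Set (Fin (2 * r) → A) :=
  { v' | ∃ v ∈ S, ∃ a : A, rule ρ (Fin.snoc v a) = b ∧ v' = shiftWin r v a }

/-- Iterated window-set semantics. -/
def foldSem : Set (Fin (2 * r) → A) → List R → List A → Set (Fin (2 * r) → A)
  | S, ρ :: ψ, b :: u => foldSem (step1 r rule ρ S b) ψ u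
  | S, _, _ => S

@[simp] lemma foldSem_nil (S : Set (Fin (2 * r) → A)) (u : List A) :
    foldSem r rule S [] u = S := by cases u <;> rfl

@[simp] lemma foldSem_cons (S : Set (Fin (2 * r) → A)) (ρ : R) (ψ : List R)
    (b : A) (u : List A) :
    foldSem r rule S (ρ :: ψ) (b :: u) = foldSem r rule (step1 r rule ρ S b) ψ u := rfl

lemma mem_foldSem [Nonempty A] (hr : 1 ≤ r) :
    ∀ (ψ : List R) (u : List A) (_ : u.length = ψ.length)
      (S : Set (Fin (2 * r) → A)) (v' : Fin (2 * r) → A),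
      v' ∈ foldSem r rule S ψ u ↔
        ∃ w : ℕ → A, win r w 0 ∈ S ∧
          (∀ (m : ℕ) (hm : m < ψ.length) (hm' : m < u.length),
            rule (ψ.get ⟨m, hm⟩) (winE r w m) = u.get ⟨m, hm'⟩) ∧
          v' = win r w ψ.length := by
  intro ψ
  induction ψ with
  | nil =>
    intro u hu S v'
    simp only [List.length_nil, List.length_eq_zero_iff] at hu
    subst hu
    rw [foldSem_nil]
    constructor
    · intro hv'
      refine ⟨fun n => if h : n < 2 * r then v' ⟨n, h⟩ else Classical.arbitrary A, ?_, ?_, ?_⟩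
      · convert hv' using 1
        funext k
        simp [win, k.isLt]
      · intro m hm; simp at hm
      · funext k
        simp [win, k.isLt]
    · rintro ⟨w, hwS, -, hv'⟩
      rw [hv']
      exact hwS
  | cons ρ ψ' ih =>
    intro u hu S v'
    match u with
    | b :: u' =>
      have hu' : u'.length = ψ'.length := by simpa using hu
      rw [foldSem_cons, ih u' hu' (step1 r rule ρ S b) v']
      constructor
      · rintro ⟨w, hwS1, hcond, hv'⟩
        obtain ⟨v, hvS, a, hrule, hshift⟩ := hwS1
        refine ⟨consW r hr v w, ?_, ?_, ?_⟩
        · rw [win_consW_zero r hr v a w hshift]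
          exact hvS
        · intro m hm hm'
          match m with
          | 0 =>
            show rule ρ (winE r (consW r hr v w) 0) = b
            rw [winE_consW_zero r hr v a w hshift]
            exact hrule
          | m + 1 =>
            have hm2 : m < ψ'.length := by simpa using hm
            have hm2' : m < u'.length := by simpa using hm'
            show rule (ψ'.get ⟨m, hm2⟩) (winE r (consW r hr v w) (m + 1)) = u'.get ⟨m, hm2'⟩
            rw [winE_consW r hr v w m]
            exact hcond m hm2 hm2'
        · rw [hv']
          show win r w ψ'.length = win r (consW r hr v w) (ψ'.length + 1)
          rw [win_consW r hr v w ψ'.length]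
      · rintro ⟨w, hwS, hcond, hv'⟩
        refine ⟨fun n => w (n + 1), ?_, ?_, ?_⟩
        · refine ⟨win r w 0, hwS, w (2 * r), ?_, ?_⟩
          · have h1 : (Fin.snoc (win r w 0) (w (2 * r)) : Fin (2 * r + 1) → A)
                = winE r w 0 := by
              have := snoc_win r w 0
              rwa [show (0 : ℕ) + 2 * r = 2 * r from by omega] at this
            rw [h1]
            exact hcond 0 (by simp) (by simp)
          · have h2 := shift_win r w 0
            rw [show (0 : ℕ) + 2 * r = 2 * r from by omega] at h2
            rw [h2]
            funext k
            show w (0 + (k : ℕ) + 1) = w (0 + 1 + (k : ℕ))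
            congr 1; omega
        · intro m hm hm'
          have hm2 : m + 1 < (ρ :: ψ').length := by simpa using hm
          have hm2' : m + 1 < (b :: u').length := by simpa using hm'
          have := hcond (m + 1) hm2 hm2'
          have harg : winE r (fun n => w (n + 1)) m = winE r w (m + 1) := by
            funext k
            show w (m + (k : ℕ) + 1) = w (m + 1 + (k : ℕ))
            congr 1; omega
          rw [harg]
          exact this
        · have harg : win r (fun n => w (n + 1)) ψ'.length
              = win r w (ψ'.length + 1) := by
            funext k
            show w (ψ'.length + (k : ℕ) + 1) = w (ψ'.length + 1 + (k : ℕ))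
            congr 1; omega
          rw [harg]
          rw [hv']
          rfl

variable (A) in
/-- The (large) DFA recognizing non-surjectivity. Its state is the set of
window-sets reachable over all possible output words. -/
def bigDFA : DFA R (Set (Set (Fin (2 * r) → A))) where
  step := fun T ρ => { S' | ∃ S ∈ T, ∃ b : A, S' = step1 r rule ρ S b }
  start := {Set.univ}
  accept := { T | ∅ ∈ T }

lemma evalFrom_bigDFA :
    ∀ (ψ : List R) (T : Set (Set (Fin (2 * r) → A))),
      (bigDFA A r rule).evalFrom T ψ
        = { S' | ∃ S ∈ T, ∃ u : List A, u.length = ψ.length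
            ∧ S' = foldSem r rule S ψ u } := by
  intro ψ
  induction ψ with
  | nil =>
    intro T
    rw [DFA.evalFrom_nil]
    ext S'
    simp only [Set.mem_setOf_eq, List.length_nil, List.length_eq_zero_iff]
    constructor
    · intro h
      exact ⟨S', h, [], rfl, by rw [foldSem_nil]⟩
    · rintro ⟨S, hS, u, rfl, rfl⟩
      exact hS
  | cons ρ ψ' ih =>
    intro T
    have h1 : (bigDFA A r rule).evalFrom T (ρ :: ψ')
        = (bigDFA A r rule).evalFrom ((bigDFA A r rule).step T ρ) ψ' := rfl
    rw [h1, ih]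
    ext S'
    simp only [Set.mem_setOf_eq]
    constructor
    · rintro ⟨S1, hS1, u', hu', rfl⟩
      obtain ⟨S, hS, b, rfl⟩ := hS1
      exact ⟨S, hS, b :: u', by simpa using hu', by rw [foldSem_cons]⟩
    · rintro ⟨S, hS, u, hu, rfl⟩
      match u with
      | b :: u' =>
        exact ⟨step1 r rule ρ S b, ⟨S, hS, b, rfl⟩, u', by simpa using hu,
          by rw [foldSem_cons]⟩

lemma mem_accepts_bigDFA [Nonempty A] (hr : 1 ≤ r) (ψ : List R) :
    ψ ∈ (bigDFA A r rule).accepts ↔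
      ∃ u : List A, u.length = ψ.length ∧
        ¬ ∃ w : ℕ → A, ∀ (m : ℕ) (hm : m < ψ.length) (hm' : m < u.length),
          rule (ψ.get ⟨m, hm⟩) (winE r w m) = u.get ⟨m, hm'⟩ := by
  rw [DFA.mem_accepts]
  show (∅ : Set (Fin (2 * r) → A)) ∈ (bigDFA A r rule).evalFrom {Set.univ} ψ ↔ _
  rw [evalFrom_bigDFA, Set.mem_setOf_eq]
  constructor
  · rintro ⟨S, hS, u, hu, hempty⟩
    rw [Set.mem_singleton_iff] at hS
    subst hS
    refine ⟨u, hu, ?_⟩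
    rintro ⟨w, hw⟩
    have : win r w ψ.length ∈ foldSem r rule Set.univ ψ u := by
      rw [mem_foldSem r rule hr ψ u hu]
      exact ⟨w, Set.mem_univ _, hw, rfl⟩
    rw [← hempty] at this
    exact this
  · rintro ⟨u, hu, hnw⟩
    refine ⟨Set.univ, rfl, u, hu, ?_⟩
    by_contra hne
    have hne' : (foldSem r rule Set.univ ψ u).Nonempty := by
      rcases Set.eq_empty_or_nonempty (foldSem r rule Set.univ ψ u) with h | h
      · exact absurd h.symm hne
      · exact h
    obtain ⟨v', hv'⟩ := hne'
    rw [mem_foldSem r rule hr ψ u hu] at hv'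
    obtain ⟨w, -, hw, -⟩ := hv'
    exact hnw ⟨w, hw⟩

end Stmt6Aux

/-- The set `F_R` of finite distributions `ψ ∈ R^*` whose partial
transition function `h_ψ : A^{|ψ|+2r} → A^{|ψ|}` is not surjective is a regular
language over the alphabet `R`. Surjectivity of `h_ψ` is expressed as: every word
`u ∈ A^{|ψ|}` is the image of (the relevant window of) some `w`. -/
theorem stmt6 {A : Type*} [Fintype A] (hA : 2 ≤ Fintype.card A)
    (r : ℕ) (hr : 1 ≤ r) {R : Type*} [Fintype R]
    (rule : R → (Fin (2 * r + 1) → A) → A) :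
    Language.IsRegular { ψ : List R |
      ¬ ∀ u : Fin ψ.length → A, ∃ w : ℕ → A,
          ∀ m : Fin ψ.length,
            rule (ψ.get m) (fun k => w ((m : ℕ) + (k : ℕ))) = u m } := by
  classical
  haveI : Nonempty A := Fintype.card_pos_iff.mp (by omega)
  haveI : Fintype (Set (Set (Fin (2 * r) → A))) := Fintype.ofFinite _
  set n := Fintype.card (Set (Set (Fin (2 * r) → A))) with hn
  let e : Set (Set (Fin (2 * r) → A)) ≃ Fin n := Fintype.equivFin _
  refine ⟨Fin n, inferInstance, DFA.reindex e (Stmt6Aux.bigDFA A r rule), ?_⟩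
  rw [DFA.accepts_reindex]
  ext ψ
  rw [Stmt6Aux.mem_accepts_bigDFA r rule hr ψ]
  show _ ↔ ¬ _
  constructor
  · rintro ⟨u, hu, hnw⟩ hall
    obtain ⟨w, hw⟩ := hall (fun m => u.get ⟨(m : ℕ), by omega⟩)
    exact hnw ⟨w, fun m hm hm' => hw ⟨m, hm⟩⟩
  · intro h
    rw [not_forall] at h
    obtain ⟨u, hu⟩ := h
    refine ⟨List.ofFn u, by simp, ?_⟩
    rintro ⟨w, hw⟩
    apply hu
    refine ⟨w, fun m => ?_⟩
    have hm' : (m : ℕ) < (List.ofFn u).length := by simp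
    have := hw (m : ℕ) m.isLt hm'
    simp only [List.get_ofFn] at this
    simp at this
    exact this
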